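/- Let L be a complex Lie algebra admitting a basis realizing the bracket pattern d₅(1,1,1), and let L′ be a complex Lie algebra admitting a basis f₁,…,f₅ whose only nonzero brackets among basis vectors (up to antisymmetry) are [f₃,f₄]=f₂, [f₁,f₅]=f₂, [f₂,f₅]=f₂, [f₃,f₅]=f₁+f₃+f₄ (the pattern d₁₄(0:1)). Then L and L′ are isomorphic as Lie algebras over ℂ. -/

import Mathlib

/-- `Realizes L c` means that the complex Lie algebra `L` admits a basis `e₁, …, e₅`
(indexed by `Fin 5`) in which the brackets of basis vectors are given by the
structure constants `c`, i.e. `⁅eᵢ, eⱼ⁆ = ∑ₖ c i j k • eₖ` for all `i < j`,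
all brackets of basis vectors being determined by these via antisymmetry. -/
def Realizes (L : Type) [LieRing L] [LieAlgebra ℂ L]
    (c : Fin 5 → Fin 5 → Fin 5 → ℂ) : Prop :=
  ∃ e : Module.Basis (Fin 5) ℂ L, ∀ i j : Fin 5, i < j →
    ⁅e i, e j⁆ = ∑ k, c i j k • e k

/-- The bracket pattern `d₅(p,q,r)` (indices shifted down by one so the basis is indexed by `Fin 5`): `[e₂,e₄]=e₁+p·e₂`, `[e₃,e₄]=e₂+q·e₃`, `[e₁,e₅]=p(q−r)·e₁`, `[e₂,e₅]=(r−q)·e₁`, `[e₃,e₅]=e₁+r·e₂−r(p−q)·e₃`, all other brackets zero. -/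
def d5 (p q r : ℂ) : Fin 5 → Fin 5 → Fin 5 → ℂ := fun i j =>
  if i = 1 ∧ j = 3 then ![1, p, 0, 0, 0]
  else if i = 2 ∧ j = 3 then ![0, 1, q, 0, 0]
  else if i = 0 ∧ j = 4 then ![p * (q - r), 0, 0, 0, 0]
  else if i = 1 ∧ j = 4 then ![r - q, 0, 0, 0, 0]
  else if i = 2 ∧ j = 4 then ![1, r, -(r * (p - q)), 0, 0]
  else 0

/-- The pattern `d₁₄(0:1)`: `[f₃,f₄]=f₂`, `[f₁,f₅]=f₂`, `[f₂,f₅]=f₂`, `[f₃,f₅]=f₁+f₃+f₄`. -/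
def patternD14 : Fin 5 → Fin 5 → Fin 5 → ℂ := fun i j =>
  if i = 2 ∧ j = 3 then ![0, 1, 0, 0, 0]
  else if i = 0 ∧ j = 4 then ![0, 1, 0, 0, 0]
  else if i = 1 ∧ j = 4 then ![0, 1, 0, 0, 0]
  else if i = 2 ∧ j = 4 then ![1, 0, 1, 1, 0]
  else 0

/-- A Lie algebra realizing `d₅(1,1,1)` is isomorphic to one realizing the
pattern `d₁₄(0:1)`. -/
theorem d5_111_iso_d14_01
    (L L' : Type) [LieRing L] [LieAlgebra ℂ L] [LieRing L'] [LieAlgebra ℂ L']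
    (hL : Realizes L (d5 1 1 1)) (hL' : Realizes L' patternD14) :
    Nonempty (L ≃ₗ⁅ℂ⁆ L') := by

  obtain ⟨e, he⟩ := hL
  obtain ⟨f, hf⟩ := hL'
  -- bracket table for f
  have h01 : ⁅f 0, f 1⁆ = 0 := by
    have := hf 0 1 (by decide); simpa [patternD14, Fin.sum_univ_five] using this
  have h02 : ⁅f 0, f 2⁆ = 0 := by
    have := hf 0 2 (by decide); simpa [patternD14, Fin.sum_univ_five] using this
  have h03 : ⁅f 0, f 3⁆ = 0 := by
    have := hf 0 3 (by decide); simpa [patternD14, Fin.sum_univ_five] using this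
  have h04 : ⁅f 0, f 4⁆ = f 1 := by
    have := hf 0 4 (by decide); simpa [patternD14, Fin.sum_univ_five] using this
  have h12 : ⁅f 1, f 2⁆ = 0 := by
    have := hf 1 2 (by decide); simpa [patternD14, Fin.sum_univ_five] using this
  have h13 : ⁅f 1, f 3⁆ = 0 := by
    have := hf 1 3 (by decide); simpa [patternD14, Fin.sum_univ_five] using this
  have h14 : ⁅f 1, f 4⁆ = f 1 := by
    have := hf 1 4 (by decide); simpa [patternD14, Fin.sum_univ_five] using this
  have h23 : ⁅f 2, f 3⁆ = f 1 := by
    have := hf 2 3 (by decide); simpa [patternD14, Fin.sum_univ_five] using this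
  have h24 : ⁅f 2, f 4⁆ = f 0 + f 2 + f 3 := by
    have := hf 2 4 (by decide)
    simpa [patternD14, Fin.sum_univ_five, add_assoc] using this
  have h34 : ⁅f 3, f 4⁆ = 0 := by
    have := hf 3 4 (by decide); simpa [patternD14, Fin.sum_univ_five] using this
  -- images of the basis
  set g : Fin 5 → L' := ![f 1 - f 0, f 0, f 2 + f 3, f 4, f 3] with hg
  set h : Fin 5 → L := ![e 1, e 0 + e 1, e 2 - e 4, e 4, e 3] with hh
  set φ : L →ₗ[ℂ] L' := e.constr ℂ g with hφ
  set ψ : L' →ₗ[ℂ] L := f.constr ℂ h with hψ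
  have φe : ∀ i, φ (e i) = g i := fun i => e.constr_basis ℂ g i
  have ψf : ∀ i, ψ (f i) = h i := fun i => f.constr_basis ℂ h i
  have hψφ : ψ.comp φ = LinearMap.id := by
    apply e.ext; intro i
    fin_cases i <;>
      simp [φe, ψf, hg, hh, map_add, map_sub]
  have hφψ : φ.comp ψ = LinearMap.id := by
    apply f.ext; intro i
    fin_cases i <;>
      simp [φe, ψf, hg, hh, map_add, map_sub]
  have keylt : ∀ i j : Fin 5, i < j → φ ⁅e i, e j⁆ = ⁅φ (e i), φ (e j)⁆ := by
    intro i j hij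
    fin_cases i <;> fin_cases j <;> (try exact absurd hij (by decide)) <;>
    · rw [he _ _ hij]
      simp only [Fin.isValue, φe, hg, Matrix.cons_val_zero, Matrix.cons_val_one,
        Matrix.head_cons, Matrix.cons_val_two, Matrix.tail_cons, Matrix.cons_val_three,
        Matrix.cons_val_four]
      simp [d5, Fin.sum_univ_five, map_add, map_smul, φe, hg, lie_add, add_lie,
        lie_sub, sub_lie, h01, h02, h03, h04, h12, h13, h14, h23, h24, h34,
        ← lie_skew (f 3) (f 2), ← lie_skew (f 4) (f 0), ← lie_skew (f 4) (f 1),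
        ← lie_skew (f 4) (f 2), ← lie_skew (f 4) (f 3), ← lie_skew (f 1) (f 0),
        ← lie_skew (f 2) (f 0), ← lie_skew (f 3) (f 0), ← lie_skew (f 2) (f 1),
        ← lie_skew (f 3) (f 1)] <;> abel
  have key : ∀ i j : Fin 5, φ ⁅e i, e j⁆ = ⁅φ (e i), φ (e j)⁆ := by
    intro i j
    rcases lt_trichotomy i j with hij | rfl | hij
    · exact keylt i j hij
    · simp
    · have := keylt j i hij
      rw [← lie_skew (e i) (e j), ← lie_skew (φ (e i)) (φ (e j)), map_neg, this]
  have H : ∀ x y : L, φ ⁅x, y⁆ = ⁅φ x, φ y⁆ := by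
    intro x y
    have hx := e.sum_repr x
    have hy := e.sum_repr y
    rw [Fin.sum_univ_five] at hx hy
    rw [← hx, ← hy]
    simp only [add_lie, lie_add, smul_lie, lie_smul, map_add, map_smul, key]
  exact ⟨{ toLieHom := { toLinearMap := φ, map_lie' := fun {x y} => H x y },
           invFun := ψ,
           left_inv := fun x => LinearMap.congr_fun hψφ x,
           right_inv := fun x => LinearMap.congr_fun hφψ x }⟩
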